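/- For any c > 0 and α ∈ (0,1], the function s ↦ exp(-c(1-s)^α) on [0,1] is the probability generating function of a ℕ-valued random variable, and this random variable ξ is discrete α-stable: for every t ∈ [0,1], t^{1/α}∘ξ' + (1-t)^{1/α}∘ξ'' has the same distribution as ξ, where ξ', ξ'' are independent copies of ξ. -/

import Mathlib

open scoped ENNReal NNReal
open MeasureTheory ProbabilityTheory

/-- Bernoulli(t) distribution as a `PMF` on `ℕ` (taking values 0 and 1). -/
noncomputable def bernNat (t : ℝ) : PMF ℕ :=
  (PMF.bernoulli (min (Real.toNNReal t) 1) (min_le_right _ _)).map (fun b => if b then 1 else 0)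

/-- Distribution of the sum of two independent `ℕ`-valued random variables. -/
noncomputable def pmfConv (p q : PMF ℕ) : PMF ℕ := p.bind fun a => q.map fun b => a + b

/-- Distribution of the sum of `n` i.i.d. Bernoulli(t) random variables. -/
noncomputable def bernSum (t : ℝ) : ℕ → PMF ℕ
  | 0 => PMF.pure 0
  | n + 1 => pmfConv (bernSum t n) (bernNat t)

/-- Binomial thinning `t ∘ ξ` of a `ℕ`-valued random variable: conditionally on `ξ = n`,
the result is the sum of `n` i.i.d. Bernoulli(t) random variables. -/
noncomputable def pmfThin (t : ℝ) (p : PMF ℕ) : PMF ℕ := p.bind (bernSum t)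

/-- Probability generating function `g_ξ(s) = E[s^ξ]`. -/
noncomputable def pgf (p : PMF ℕ) (s : ℝ) : ℝ := ∑' n : ℕ, (p n).toReal * s ^ n

/-! ### Auxiliary material -/

section Aux
open Filter Real

/-! #### Sibuya coefficients -/

noncomputable def sibP (α : ℝ) (N : ℕ) : ℝ := ∏ j ∈ Finset.range N, (1 - α / (j + 1))

noncomputable def sibB (α : ℝ) : ℕ → ℝ
  | 0 => 0
  | n + 1 => sibP α n * (α / (n + 1))

lemma sibP_succ (α : ℝ) (N : ℕ) : sibP α (N + 1) = sibP α N * (1 - α / (N + 1)) := by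
  simp [sibP, Finset.prod_range_succ]

lemma sib_rec (α : ℝ) (n : ℕ) :
    ((n:ℝ) + 1) * sibB α (n + 1) = ((n:ℝ) - α) * sibB α n + (if n = 0 then α else 0) := by
  cases n with
  | zero => simp [sibB, sibP]
  | succ m =>
    have h1 : ((m:ℝ) + 1) ≠ 0 := by positivity
    have h2 : ((m:ℝ) + 1 + 1) ≠ 0 := by positivity
    simp only [sibB, sibP_succ, Nat.succ_ne_zero, if_false]
    push_cast
    field_simp
    ring

section sibfacts
variable {α : ℝ} (hα0 : 0 < α) (hα1 : α ≤ 1)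
include hα0 hα1

lemma sibP_nonneg (N : ℕ) : 0 ≤ sibP α N := by
  apply Finset.prod_nonneg
  intro j _
  have hj : (0:ℝ) < j + 1 := by positivity
  rw [sub_nonneg, div_le_one hj]
  linarith [(by exact_mod_cast Nat.zero_le j : (0:ℝ) ≤ j)]

lemma sibP_le_one (N : ℕ) : sibP α N ≤ 1 := by
  apply Finset.prod_le_one
  · intro j _
    have hj : (0:ℝ) < j + 1 := by positivity
    rw [sub_nonneg, div_le_one hj]
    linarith [(by exact_mod_cast Nat.zero_le j : (0:ℝ) ≤ j)]
  · intro j _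
    have hj : (0:ℝ) < j + 1 := by positivity
    have : 0 ≤ α / (j+1) := by positivity
    linarith

lemma sibB_nonneg (n : ℕ) : 0 ≤ sibB α n := by
  cases n with
  | zero => simp [sibB]
  | succ n =>
    have h1 := sibP_nonneg hα0 hα1 (α := α) n
    have h2 : (0:ℝ) ≤ α / (n+1) := by positivity
    simp only [sibB]
    positivity

lemma sibB_le_one (n : ℕ) : sibB α n ≤ 1 := by
  cases n with
  | zero => simp [sibB]
  | succ n =>
    have h1 := sibP_le_one hα0 hα1 (α := α) n
    have h0 := sibP_nonneg hα0 hα1 (α := α) n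
    have hd : α / (n+1) ≤ 1 := by
      rw [div_le_one (by positivity)]
      linarith [(by exact_mod_cast Nat.zero_le n : (0:ℝ) ≤ n)]
    have hd0 : (0:ℝ) ≤ α / (n+1) := by positivity
    calc sibP α n * (α / (n+1)) ≤ 1 * 1 := mul_le_mul h1 hd hd0 zero_le_one
      _ = 1 := one_mul 1

lemma sibB_sum_range (N : ℕ) : ∑ n ∈ Finset.range (N + 1), sibB α n = 1 - sibP α N := by
  induction N with
  | zero => simp [sibB, sibP]
  | succ N ih =>
    rw [Finset.sum_range_succ, ih, sibP_succ]
    simp only [sibB]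
    ring

lemma sibP_tendsto_zero : Tendsto (fun N => sibP α N) atTop (nhds 0) := by
  have hb : ∀ N, sibP α N ≤ Real.exp (-α * ∑ j ∈ Finset.range N, 1 / ((j:ℝ) + 1)) := by
    intro N
    rw [Finset.mul_sum, Real.exp_sum]
    apply Finset.prod_le_prod
    · intro j _
      have hj : (0:ℝ) < j + 1 := by positivity
      rw [sub_nonneg, div_le_one hj]
      linarith [(by exact_mod_cast Nat.zero_le j : (0:ℝ) ≤ j)]
    · intro j _
      have h := Real.add_one_le_exp (-(α * (1/((j:ℝ)+1))))
      have heq : -α * (1/((j:ℝ)+1)) = -(α * (1/((j:ℝ)+1))) := by ring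
      rw [heq]
      have : α / ((j:ℝ)+1) = α * (1/((j:ℝ)+1)) := by ring
      linarith
  have hS : Tendsto (fun N => ∑ j ∈ Finset.range N, 1 / ((j:ℝ) + 1)) atTop atTop :=
    Real.tendsto_sum_range_one_div_nat_succ_atTop
  have h2 : Tendsto (fun N => -α * ∑ j ∈ Finset.range N, 1 / ((j:ℝ) + 1)) atTop atBot := by
    have h3 := tendsto_neg_atBot_iff.mpr (hS.const_mul_atTop hα0)
    convert h3 using 2 with N
    ring
  exact squeeze_zero (fun N => sibP_nonneg hα0 hα1 N) hb ((Real.tendsto_exp_atBot).comp h2)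

lemma sibB_hasSum : HasSum (sibB α) 1 := by
  have hsummable : Summable (sibB α) := by
    apply summable_of_sum_range_le (c := 1) (fun n => sibB_nonneg hα0 hα1 n)
    intro n
    cases n with
    | zero => simp
    | succ N =>
      rw [sibB_sum_range hα0 hα1]
      linarith [sibP_nonneg hα0 hα1 (α := α) N]
  rw [hsummable.hasSum_iff_tendsto_nat]
  rw [← tendsto_add_atTop_iff_nat 1]
  have : (fun N => ∑ i ∈ Finset.range (N + 1), sibB α i) = fun N => 1 - sibP α N := by
    funext N
    exact sibB_sum_range hα0 hα1 N
  rw [this]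
  have := tendsto_const_nhds (x := (1:ℝ)) (f := atTop (α := ℕ)) |>.sub
    (sibP_tendsto_zero hα0 hα1)
  simpa using this

end sibfacts

/-! #### Power series derivative tools -/

lemma aux_summable_deriv {r : ℝ} (h0 : 0 ≤ r) (h1 : r < 1) :
    Summable (fun n : ℕ => (n:ℝ) * r ^ (n - 1)) := by
  rw [← summable_nat_add_iff 1]
  have h2 : Summable (fun n : ℕ => ((n:ℝ) ^ 1) * r ^ n) :=
    summable_pow_mul_geometric_of_norm_lt_one 1 (by rwa [Real.norm_eq_abs, abs_of_nonneg h0])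
  have h3 : Summable (fun n : ℕ => r ^ n) := summable_geometric_of_lt_one h0 h1
  apply (h2.add h3).congr
  intro n
  push_cast
  ring

lemma aux_hasDerivAt {b : ℕ → ℝ} (hb0 : ∀ n, 0 ≤ b n) (hb1 : ∀ n, b n ≤ 1)
    {x : ℝ} (hx : |x| < 1) :
    HasDerivAt (fun z => ∑' n, b n * z ^ n) (∑' n, b n * ((n:ℝ) * x ^ (n - 1))) x := by
  set r : ℝ := (|x| + 1) / 2 with hr
  have hr0 : 0 ≤ r := by positivity
  have hr1 : r < 1 := by rw [hr]; linarith
  have hxr : |x| < r := by rw [hr]; linarith [abs_nonneg x]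
  apply hasDerivAt_tsum_of_isPreconnected
    (g := fun n z => b n * z ^ n) (g' := fun n y => b n * ((n:ℝ) * y ^ (n - 1)))
    (aux_summable_deriv hr0 hr1)
    (Metric.isOpen_ball (x := (0:ℝ)) (ε := r)) (convex_ball (0:ℝ) r).isPreconnected
  · intro n y _
    exact (hasDerivAt_pow n y).const_mul (b n)
  · intro n y hy
    rw [Metric.mem_ball, Real.dist_eq, sub_zero] at hy
    rw [Real.norm_eq_abs, abs_mul, abs_mul, abs_pow]
    have h1 : |b n| ≤ 1 := by rw [abs_of_nonneg (hb0 n)]; exact hb1 n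
    have h2 : |y| ^ (n-1) ≤ r ^ (n-1) := pow_le_pow_left₀ (abs_nonneg y) hy.le _
    have h3 : |(n:ℝ)| = (n:ℝ) := abs_of_nonneg (Nat.cast_nonneg n)
    calc |b n| * (|(n:ℝ)| * |y| ^ (n-1)) ≤ 1 * ((n:ℝ) * r ^ (n-1)) := by
          rw [h3]
          apply mul_le_mul h1 _ (by positivity) zero_le_one
          exact mul_le_mul_of_nonneg_left h2 (Nat.cast_nonneg n)
      _ = (n:ℝ) * r ^ (n-1) := one_mul _
  · rw [Metric.mem_ball, dist_zero_left]; simpa using by positivity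
  · apply summable_of_ne_finset_zero (s := {0})
    intro n hn
    simp only [Finset.mem_singleton] at hn
    rw [zero_pow hn, mul_zero]
  · rwa [Metric.mem_ball, Real.dist_eq, sub_zero]

/-! #### The Sibuya generating function -/

lemma sib_ode (α : ℝ) {x : ℝ} (hx0 : 0 ≤ x) (hx1 : x < 1)
    (hb0 : ∀ n, 0 ≤ sibB α n) (hb1 : ∀ n, sibB α n ≤ 1) :
    (1 - x) * (∑' n, sibB α n * ((n:ℝ) * x ^ (n - 1)))
      = α * (1 - ∑' n, sibB α n * x ^ n) := by
  set b := sibB α with hb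
  have hxn : ∀ n : ℕ, (0:ℝ) ≤ x ^ n := fun n => pow_nonneg hx0 n
  have S1 : Summable (fun n => b n * x ^ n) := by
    apply Summable.of_nonneg_of_le (fun n => mul_nonneg (hb0 n) (hxn n))
      (fun n => by calc b n * x ^ n ≤ 1 * x ^ n := mul_le_mul_of_nonneg_right (hb1 n) (hxn n)
                     _ = x ^ n := one_mul _)
      (summable_geometric_of_lt_one hx0 hx1)
  have Sd : Summable (fun n => b n * ((n:ℝ) * x ^ (n - 1))) := by
    apply Summable.of_nonneg_of_le
      (fun n => mul_nonneg (hb0 n) (mul_nonneg (Nat.cast_nonneg n) (pow_nonneg hx0 _)))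
      (fun n => by calc b n * ((n:ℝ) * x ^ (n-1)) ≤ 1 * ((n:ℝ) * x ^ (n-1)) :=
                        mul_le_mul_of_nonneg_right (hb1 n)
                          (mul_nonneg (Nat.cast_nonneg n) (pow_nonneg hx0 _))
                     _ = (n:ℝ) * x ^ (n-1) := one_mul _)
      (aux_summable_deriv hx0 hx1)
  have SA : Summable (fun n : ℕ => ((n:ℝ) + 1) * b (n + 1) * x ^ n) := by
    apply ((summable_nat_add_iff 1).mpr Sd).congr
    intro n
    simp only [Nat.add_sub_cancel]
    push_cast
    ring
  have SB : Summable (fun n : ℕ => (n:ℝ) * b n * x ^ n) := by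
    apply (Sd.mul_left x).congr
    intro n
    cases n with
    | zero => simp
    | succ m =>
      simp only [Nat.add_sub_cancel, pow_succ]
      push_cast
      ring
  have Site : Summable (fun n : ℕ => (if n = 0 then α else 0) * x ^ n) := by
    apply summable_of_ne_finset_zero (s := {0})
    intro n hn
    simp only [Finset.mem_singleton] at hn
    simp [hn]
  have hg'0 : ∑' n, b n * ((n:ℝ) * x ^ (n - 1)) = ∑' n : ℕ, ((n:ℝ) + 1) * b (n + 1) * x ^ n := by
    rw [Summable.tsum_eq_zero_add Sd]
    simp only [Nat.cast_zero, zero_mul, mul_zero, zero_add]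
    apply tsum_congr
    intro n
    simp only [Nat.add_sub_cancel]
    push_cast
    ring
  have hxg' : x * ∑' n, b n * ((n:ℝ) * x ^ (n - 1)) = ∑' n : ℕ, (n:ℝ) * b n * x ^ n := by
    rw [← tsum_mul_left, Summable.tsum_eq_zero_add (Sd.mul_left x), Summable.tsum_eq_zero_add SB]
    simp only [Nat.cast_zero, zero_mul, mul_zero, zero_add, Nat.cast_ofNat]
    apply tsum_congr
    intro n
    simp only [Nat.add_sub_cancel, pow_succ]
    push_cast
    ring
  calc (1 - x) * (∑' n, b n * ((n:ℝ) * x ^ (n - 1)))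
      = (∑' n, b n * ((n:ℝ) * x ^ (n - 1))) - x * ∑' n, b n * ((n:ℝ) * x ^ (n - 1)) := by ring
    _ = (∑' n : ℕ, ((n:ℝ) + 1) * b (n + 1) * x ^ n) - ∑' n : ℕ, (n:ℝ) * b n * x ^ n := by
        rw [hxg', hg'0]
    _ = ∑' n : ℕ, (((n:ℝ) + 1) * b (n + 1) * x ^ n - (n:ℝ) * b n * x ^ n) := (Summable.tsum_sub SA SB).symm
    _ = ∑' n, ((if n = 0 then α else 0) * x ^ n - α * (b n * x ^ n)) := by
        apply tsum_congr
        intro n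
        have h := sib_rec α n
        rw [← hb] at h
        linear_combination x ^ n * h
    _ = (∑' n, (if n = 0 then α else 0) * x ^ n) - α * ∑' n, b n * x ^ n := by
        rw [Summable.tsum_sub Site ((S1.mul_left α).congr (fun n => rfl))]
        congr 1
        rw [← tsum_mul_left]
    _ = α - α * ∑' n, b n * x ^ n := by
        congr 1
        rw [tsum_eq_single 0 (fun n hn => by simp [hn])]
        simp
    _ = α * (1 - ∑' n, b n * x ^ n) := by ring

lemma sib_pgf (α : ℝ)
    (hb0 : ∀ n, 0 ≤ sibB α n) (hb1 : ∀ n, sibB α n ≤ 1)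
    {s : ℝ} (hs0 : 0 ≤ s) (hs1 : s < 1) :
    ∑' n, sibB α n * s ^ n = 1 - (1 - s) ^ α := by
  set g : ℝ → ℝ := fun x => ∑' n, sibB α n * x ^ n with hgdef
  set h : ℝ → ℝ := fun x => (1 - g x) * (1 - x) ^ (-α) with hhdef
  have hder : ∀ x ∈ Set.Ico (0:ℝ) 1, HasDerivAt h 0 x := by
    rintro x ⟨hx0, hx1⟩
    have hx1' : (0:ℝ) < 1 - x := by linarith
    have habs : |x| < 1 := by rw [abs_of_nonneg hx0]; exact hx1
    have hg := aux_hasDerivAt hb0 hb1 habs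
    set G' := ∑' n, sibB α n * ((n:ℝ) * x ^ (n - 1)) with hG'
    have hlin : HasDerivAt (fun y : ℝ => 1 - y) (-1) x := (hasDerivAt_id x).const_sub 1
    have hpow : HasDerivAt (fun y : ℝ => y ^ (-α)) (-α * (1 - x) ^ (-α - 1)) (1 - x) :=
      Real.hasDerivAt_rpow_const (Or.inl (ne_of_gt hx1'))
    have hcomp : HasDerivAt (fun y : ℝ => (1 - y) ^ (-α)) (-α * (1 - x) ^ (-α - 1) * (-1)) x :=
      HasDerivAt.comp x hpow hlin
    have h1 : HasDerivAt (fun y : ℝ => 1 - g y) (-G') x := hg.const_sub 1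
    have hmul := h1.mul hcomp
    have hODE := sib_ode α hx0 hx1 hb0 hb1
    have heq : (1 - x) ^ (-α) = (1 - x) ^ (-α - 1) * (1 - x) := by
      rw [← Real.rpow_add_one (ne_of_gt hx1')]
      ring_nf
    have key : -G' * (1 - x) ^ (-α) + (1 - g x) * (-α * (1 - x) ^ (-α - 1) * (-1)) = 0 := by
      rw [heq]
      have hODE' : (1 - x) * G' = α * (1 - g x) := hODE
      linear_combination (-(1 - x) ^ (-α - 1)) * hODE'
    rw [key] at hmul
    exact hmul
  have hcont : ContinuousOn h (Set.Icc 0 s) := fun x hx =>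
    ((hder x ⟨hx.1, lt_of_le_of_lt hx.2 hs1⟩).continuousAt).continuousWithinAt
  have hs' : h s = h 0 :=
    constant_of_has_deriv_right_zero hcont
      (fun x hx => ((hder x ⟨hx.1, lt_of_lt_of_le hx.2 (le_of_lt hs1)⟩).hasDerivWithinAt))
      s (Set.right_mem_Icc.mpr hs0)
  have hg0 : g 0 = 0 := by
    show (∑' n, sibB α n * (0:ℝ) ^ n) = 0
    rw [tsum_eq_single 0 (fun n hn => by simp [zero_pow hn])]
    simp [sibB]
  have hh0 : h 0 = 1 := by
    rw [hhdef]
    simp [hg0, Real.one_rpow]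
  rw [hh0] at hs'
  have hpos : (0:ℝ) < 1 - s := by linarith
  have hinv : (1 - s) ^ (-α) * (1 - s) ^ α = 1 := by
    rw [← Real.rpow_add hpos]
    simp
  have h2 : (1 - g s) * ((1 - s) ^ (-α) * (1 - s) ^ α) = 1 * (1 - s) ^ α := by
    rw [← mul_assoc]
    exact congrArg (· * (1 - s) ^ α) hs'
  rw [hinv, mul_one, one_mul] at h2
  have : g s = 1 - (1 - s) ^ α := by linarith
  exact this

/-! #### ENNReal generating function -/

noncomputable def egf (p : PMF ℕ) (r : ℝ≥0∞) : ℝ≥0∞ := ∑' n : ℕ, p n * r ^ n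

lemma pgf_eq_egf (p : PMF ℕ) {s : ℝ} (hs0 : 0 ≤ s) :
    pgf p s = (egf p (ENNReal.ofReal s)).toReal := by
  rw [egf, ENNReal.tsum_toReal_eq (fun n => ENNReal.mul_ne_top (p.apply_ne_top n)
    (ENNReal.pow_ne_top ENNReal.ofReal_ne_top))]
  apply tsum_congr
  intro n
  rw [ENNReal.toReal_mul, ENNReal.toReal_pow, ENNReal.toReal_ofReal hs0]

lemma egf_bind (p : PMF ℕ) (f : ℕ → PMF ℕ) (r : ℝ≥0∞) :
    egf (p.bind f) r = ∑' a : ℕ, p a * egf (f a) r := by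
  simp only [egf, PMF.bind_apply]
  calc ∑' n : ℕ, (∑' a : ℕ, p a * (f a) n) * r ^ n
      = ∑' (n : ℕ) (a : ℕ), p a * (f a) n * r ^ n :=
        tsum_congr fun n => ENNReal.tsum_mul_right.symm
    _ = ∑' (a : ℕ) (n : ℕ), p a * (f a) n * r ^ n := ENNReal.tsum_comm
    _ = ∑' a : ℕ, p a * ∑' n : ℕ, (f a) n * r ^ n := by
        apply tsum_congr
        intro a
        rw [← ENNReal.tsum_mul_left]
        exact tsum_congr fun n => by ring

lemma egf_map_add (q : PMF ℕ) (a : ℕ) (r : ℝ≥0∞) :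
    egf (q.map (fun b => a + b)) r = r ^ a * egf q r := by
  simp only [egf, PMF.map_apply]
  refine Eq.trans (tsum_congr fun n => ENNReal.tsum_mul_right.symm) ?_
  refine Eq.trans ENNReal.tsum_comm ?_
  rw [← ENNReal.tsum_mul_left]
  apply tsum_congr
  intro b
  rw [tsum_eq_single (a + b) (fun n hn => by rw [if_neg hn, zero_mul]), if_pos rfl, pow_add]
  ring

lemma egf_conv (p q : PMF ℕ) (r : ℝ≥0∞) :
    egf (pmfConv p q) r = egf p r * egf q r := by
  rw [pmfConv, egf_bind]
  calc ∑' a : ℕ, p a * egf (q.map fun b => a + b) r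
      = ∑' a : ℕ, (p a * r ^ a) * egf q r := by
        apply tsum_congr; intro a; rw [egf_map_add]; ring
    _ = (∑' a : ℕ, p a * r ^ a) * egf q r := by rw [ENNReal.tsum_mul_right]
    _ = egf p r * egf q r := rfl

lemma egf_pure_zero (r : ℝ≥0∞) : egf (PMF.pure 0) r = 1 := by
  rw [egf, tsum_eq_single 0 (fun n hn => by simp [PMF.pure_apply, hn])]
  simp

lemma egf_bern {t : ℝ} (h1 : t ≤ 1) (r : ℝ≥0∞) :
    egf (bernNat t) r = (1 - ENNReal.ofReal t) + ENNReal.ofReal t * r := by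
  have hmin : min (Real.toNNReal t) 1 = Real.toNNReal t :=
    min_eq_left (Real.toNNReal_le_one.mpr h1)
  simp only [bernNat, egf, PMF.map_apply]
  refine Eq.trans (tsum_congr fun n => ENNReal.tsum_mul_right.symm) ?_
  refine Eq.trans ENNReal.tsum_comm ?_
  rw [tsum_bool]
  rw [tsum_eq_single ((0:ℕ)) (fun n hn => by rw [if_neg (by simpa using hn), zero_mul]),
    if_pos rfl]
  rw [tsum_eq_single ((1:ℕ)) (fun n hn => by rw [if_neg (by simpa using hn), zero_mul]),
    if_pos rfl]
  simp [PMF.bernoulli_apply, hmin, pow_one]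
  rfl

lemma egf_bernSum {t : ℝ} (h1 : t ≤ 1) (n : ℕ) (r : ℝ≥0∞) :
    egf (bernSum t n) r = ((1 - ENNReal.ofReal t) + ENNReal.ofReal t * r) ^ n := by
  induction n with
  | zero => rw [bernSum, egf_pure_zero, pow_zero]
  | succ n ih => rw [bernSum, egf_conv, ih, egf_bern h1, pow_succ]

lemma egf_thin {t : ℝ} (h1 : t ≤ 1) (p : PMF ℕ) (r : ℝ≥0∞) :
    egf (pmfThin t p) r = egf p ((1 - ENNReal.ofReal t) + ENNReal.ofReal t * r) := by
  rw [pmfThin, egf_bind]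
  exact tsum_congr fun n => by rw [egf_bernSum h1]

/-! #### Injectivity of the pgf -/

lemma pmf_toReal_le_one (p : PMF ℕ) (k : ℕ) : (p k).toReal ≤ 1 := by
  have h := PMF.coe_le_one p k
  have := ENNReal.toReal_mono ENNReal.one_ne_top h
  simpa using this

lemma pgf_summable (p : PMF ℕ) {s : ℝ} (h0 : 0 ≤ s) (h1 : s < 1) (n : ℕ) :
    Summable (fun k : ℕ => (p (k + n)).toReal * s ^ k) := by
  apply Summable.of_nonneg_of_le
    (fun k => mul_nonneg ENNReal.toReal_nonneg (pow_nonneg h0 k))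
    (fun k => by
      calc (p (k + n)).toReal * s ^ k ≤ 1 * s ^ k :=
            mul_le_mul_of_nonneg_right (pmf_toReal_le_one p _) (pow_nonneg h0 k)
        _ = s ^ k := one_mul _)
    (summable_geometric_of_lt_one h0 h1)

lemma pgf_tail_est (p : PMF ℕ) (n : ℕ) {s : ℝ} (h0 : 0 < s) (h2 : s ≤ 1/2) :
    |(∑' k : ℕ, (p (k + n)).toReal * s ^ k) - (p n).toReal| ≤ 2 * s := by
  have h1 : s < 1 := by linarith
  have hsum := pgf_summable p h0.le h1 n
  have htail : Summable (fun k : ℕ => (p (k + 1 + n)).toReal * s ^ (k + 1)) := by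
    apply ((summable_nat_add_iff 1).mpr hsum).congr
    intro k
    simp only [add_right_comm]
  have hzero := Summable.tsum_eq_zero_add hsum
  simp only [zero_add, pow_zero, mul_one] at hzero
  have heq : (∑' k : ℕ, (p (k + n)).toReal * s ^ k) - (p n).toReal
      = ∑' k : ℕ, (p (k + 1 + n)).toReal * s ^ (k + 1) := by
    rw [hzero]
    have : (∑' k : ℕ, (p (k + 1 + n)).toReal * s ^ (k + 1))
        = ∑' k : ℕ, (p ((k + 1) + n)).toReal * s ^ (k + 1) := by
      apply tsum_congr; intro k; rw [add_right_comm]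
    rw [this]
    ring
  rw [heq]
  have hgeom : Summable (fun k : ℕ => s ^ (k + 1)) := by
    apply ((summable_geometric_of_lt_one h0.le h1).mul_left s).congr
    intro k
    rw [pow_succ]
    ring
  have hbnd : (∑' k : ℕ, (p (k + 1 + n)).toReal * s ^ (k + 1)) ≤ ∑' k : ℕ, s ^ (k + 1) := by
    apply Summable.tsum_le_tsum _ htail hgeom
    intro k
    calc (p (k + 1 + n)).toReal * s ^ (k + 1) ≤ 1 * s ^ (k + 1) :=
          mul_le_mul_of_nonneg_right (pmf_toReal_le_one p _) (pow_nonneg h0.le _)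
      _ = s ^ (k + 1) := one_mul _
  have hval : (∑' k : ℕ, s ^ (k + 1)) = s * (1 - s)⁻¹ := by
    have : (fun k : ℕ => s ^ (k + 1)) = (fun k : ℕ => s * s ^ k) := by
      funext k; rw [pow_succ]; ring
    rw [this, tsum_mul_left, tsum_geometric_of_lt_one h0.le h1]
  have hfin : s * (1 - s)⁻¹ ≤ 2 * s := by
    have hinv : (1 - s)⁻¹ ≤ 2 := by
      have := one_div_le_one_div_of_le (by norm_num : (0:ℝ) < 1/2) (by linarith : 1/2 ≤ 1 - s)
      simpa [one_div] using this
    nlinarith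
  have hnn : 0 ≤ ∑' k : ℕ, (p (k + 1 + n)).toReal * s ^ (k + 1) :=
    tsum_nonneg fun k => mul_nonneg ENNReal.toReal_nonneg (pow_nonneg h0.le _)
  rw [abs_of_nonneg hnn]
  calc (∑' k : ℕ, (p (k + 1 + n)).toReal * s ^ (k + 1)) ≤ ∑' k : ℕ, s ^ (k + 1) := hbnd
    _ = s * (1 - s)⁻¹ := hval
    _ ≤ 2 * s := hfin

lemma pgf_split (p : PMF ℕ) (n : ℕ) {s : ℝ} (h0 : 0 ≤ s) (h1 : s < 1) :
    pgf p s = (∑ i ∈ Finset.range n, (p i).toReal * s ^ i)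
      + s ^ n * ∑' k : ℕ, (p (k + n)).toReal * s ^ k := by
  have hsum := pgf_summable p h0 h1 0
  have hsum' : Summable (fun k : ℕ => (p k).toReal * s ^ k) := by
    apply hsum.congr; intro k; rw [add_zero]
  rw [pgf, ← Summable.sum_add_tsum_nat_add n hsum']
  congr 1
  rw [← tsum_mul_left]
  apply tsum_congr
  intro k
  rw [pow_add]
  ring

lemma pgf_inj (p q : PMF ℕ) (h : ∀ s : ℝ, 0 < s → s < 1 → pgf p s = pgf q s) : p = q := by
  apply PMF.ext
  intro n
  induction n using Nat.strong_induction_on with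
  | _ n ih =>
    have htails : ∀ s : ℝ, 0 < s → s < 1 →
        (∑' k : ℕ, (p (k + n)).toReal * s ^ k) = ∑' k : ℕ, (q (k + n)).toReal * s ^ k := by
      intro s hs0 hs1
      have hp := pgf_split p n hs0.le hs1
      have hq := pgf_split q n hs0.le hs1
      have hheads : (∑ i ∈ Finset.range n, (p i).toReal * s ^ i)
          = ∑ i ∈ Finset.range n, (q i).toReal * s ^ i := by
        apply Finset.sum_congr rfl
        intro i hi
        rw [ih i (Finset.mem_range.mp hi)]
      have hps := h s hs0 hs1
      rw [hp, hq, hheads] at hps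
      have hsn : s ^ n ≠ 0 := pow_ne_zero n (ne_of_gt hs0)
      exact mul_left_cancel₀ hsn (by linarith)
    set a : ℕ → ℝ := fun j => ((j:ℝ) + 2)⁻¹ with ha
    have ha0 : ∀ j, 0 < a j := fun j => by positivity
    have hah : ∀ j, a j ≤ 1/2 := by
      intro j
      show ((j:ℝ) + 2)⁻¹ ≤ 1/2
      rw [← one_div]
      apply one_div_le_one_div_of_le (by norm_num)
      have : (0:ℝ) ≤ (j:ℝ) := Nat.cast_nonneg j
      linarith
    have ha1 : ∀ j, a j < 1 := fun j => lt_of_le_of_lt (hah j) (by norm_num)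
    have hatend : Tendsto a atTop (nhds 0) := by
      have h1 : Tendsto (fun j : ℕ => ((j:ℝ))⁻¹) atTop (nhds 0) :=
        tendsto_inv_atTop_nhds_zero_nat
      have h2 : Tendsto (fun j : ℕ => j + 2) atTop atTop := tendsto_add_atTop_nat 2
      apply (h1.comp h2).congr
      intro j
      simp only [Function.comp_apply]
      push_cast
      ring_nf
      simp only [ha]
      ring
    have hplim : Tendsto (fun j => ∑' k : ℕ, (p (k + n)).toReal * (a j) ^ k) atTop
        (nhds ((p n).toReal)) := by
      have hz : Tendsto (fun j => (∑' k : ℕ, (p (k + n)).toReal * (a j) ^ k) - (p n).toReal)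
          atTop (nhds 0) := by
        apply squeeze_zero_norm (fun j => pgf_tail_est p n (ha0 j) (hah j))
        have := hatend.const_mul (2:ℝ)
        simpa using this
      have := hz.add_const ((p n).toReal)
      simpa using this
    have hqlim : Tendsto (fun j => ∑' k : ℕ, (q (k + n)).toReal * (a j) ^ k) atTop
        (nhds ((q n).toReal)) := by
      have hz : Tendsto (fun j => (∑' k : ℕ, (q (k + n)).toReal * (a j) ^ k) - (q n).toReal)
          atTop (nhds 0) := by
        apply squeeze_zero_norm (fun j => pgf_tail_est q n (ha0 j) (hah j))
        have := hatend.const_mul (2:ℝ)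
        simpa using this
      have := hz.add_const ((q n).toReal)
      simpa using this
    have heqfun : (fun j => ∑' k : ℕ, (p (k + n)).toReal * (a j) ^ k)
        = fun j => ∑' k : ℕ, (q (k + n)).toReal * (a j) ^ k := by
      funext j
      exact htails (a j) (ha0 j) (ha1 j)
    rw [heqfun] at hplim
    have := tendsto_nhds_unique hplim hqlim
    exact (ENNReal.toReal_eq_toReal_iff' (p.apply_ne_top n) (q.apply_ne_top n)).mp this

/-! #### The discrete stable PMF -/

noncomputable def sibPMF (α : ℝ) (hα0 : 0 < α) (hα1 : α ≤ 1) : PMF ℕ := by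
  refine ⟨fun n => ENNReal.ofReal (sibB α n), ?_⟩
  apply ENNReal.hasSum_coe.mpr
  rw [← Real.toNNReal_one]
  exact (sibB_hasSum hα0 hα1).toNNReal (fun n => sibB_nonneg hα0 hα1 n)

lemma sibPMF_apply (α : ℝ) (hα0 : 0 < α) (hα1 : α ≤ 1) (n : ℕ) :
    sibPMF α hα0 hα1 n = ENNReal.ofReal (sibB α n) := rfl

noncomputable def sibPow (α : ℝ) (hα0 : 0 < α) (hα1 : α ≤ 1) : ℕ → PMF ℕ
  | 0 => PMF.pure 0
  | k + 1 => pmfConv (sibPow α hα0 hα1 k) (sibPMF α hα0 hα1)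

noncomputable def stablePMF (c α : ℝ) (hα0 : 0 < α) (hα1 : α ≤ 1) : PMF ℕ :=
  (poissonPMF c.toNNReal).bind (sibPow α hα0 hα1)

lemma sib_pgf_all (α : ℝ) (hα0 : 0 < α) (hα1 : α ≤ 1)
    {s : ℝ} (hs0 : 0 ≤ s) (hs1 : s ≤ 1) :
    ∑' n, sibB α n * s ^ n = 1 - (1 - s) ^ α := by
  rcases lt_or_eq_of_le hs1 with h | h
  · exact sib_pgf α (fun n => sibB_nonneg hα0 hα1 n) (fun n => sibB_le_one hα0 hα1 n) hs0 h
  · subst h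
    simp only [one_pow, mul_one, sub_self]
    rw [Real.zero_rpow (ne_of_gt hα0), sub_zero]
    exact (sibB_hasSum hα0 hα1).tsum_eq

lemma egf_sibPMF (α : ℝ) (hα0 : 0 < α) (hα1 : α ≤ 1)
    {s : ℝ} (hs0 : 0 ≤ s) (hs1 : s ≤ 1) :
    egf (sibPMF α hα0 hα1) (ENNReal.ofReal s) = ENNReal.ofReal (1 - (1 - s) ^ α) := by
  have hb0 : ∀ n, 0 ≤ sibB α n := fun n => sibB_nonneg hα0 hα1 n
  have hsummable : Summable (fun n => sibB α n * s ^ n) := by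
    apply Summable.of_nonneg_of_le (fun n => mul_nonneg (hb0 n) (pow_nonneg hs0 n))
      (fun n => by
        calc sibB α n * s ^ n ≤ sibB α n * 1 :=
              mul_le_mul_of_nonneg_left (pow_le_one₀ hs0 hs1) (hb0 n)
          _ = sibB α n := mul_one _)
      (sibB_hasSum hα0 hα1).summable
  rw [← sib_pgf_all α hα0 hα1 hs0 hs1,
    ENNReal.ofReal_tsum_of_nonneg (fun n => mul_nonneg (hb0 n) (pow_nonneg hs0 n)) hsummable]
  apply tsum_congr
  intro n
  rw [sibPMF_apply, ENNReal.ofReal_mul (hb0 n), ENNReal.ofReal_pow hs0]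

lemma egf_sibPow (α : ℝ) (hα0 : 0 < α) (hα1 : α ≤ 1) (k : ℕ) (r : ℝ≥0∞) :
    egf (sibPow α hα0 hα1 k) r = (egf (sibPMF α hα0 hα1) r) ^ k := by
  induction k with
  | zero => rw [sibPow, egf_pure_zero, pow_zero]
  | succ k ih => rw [sibPow, egf_conv, ih, pow_succ]

lemma egf_stablePMF (c α : ℝ) (hc : 0 < c) (hα0 : 0 < α) (hα1 : α ≤ 1)
    {s : ℝ} (hs0 : 0 ≤ s) (hs1 : s ≤ 1) :
    egf (stablePMF c α hα0 hα1) (ENNReal.ofReal s)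
      = ENNReal.ofReal (Real.exp (-c * (1 - s) ^ α)) := by
  set y : ℝ := 1 - (1 - s) ^ α with hy
  have h1s0 : (0:ℝ) ≤ 1 - s := by linarith
  have h1s1 : 1 - s ≤ 1 := by linarith
  have hy0 : 0 ≤ y := by
    rw [hy, sub_nonneg]
    exact Real.rpow_le_one h1s0 h1s1 hα0.le
  have hcast : ((c.toNNReal : ℝ≥0) : ℝ) = c := Real.coe_toNNReal c hc.le
  have hterm : ∀ k : ℕ, (0:ℝ) ≤ Real.exp (-c) * c ^ k / (Nat.factorial k) * y ^ k := by
    intro k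
    have : (0:ℝ) ≤ c ^ k := pow_nonneg hc.le k
    positivity
  have hexp : HasSum (fun k : ℕ => Real.exp (-c) * c ^ k / (Nat.factorial k) * y ^ k)
      (Real.exp (-c) * Real.exp (c * y)) := by
    have h := NormedSpace.expSeries_div_hasSum_exp (c * y)
    rw [← Real.exp_eq_exp_ℝ] at h
    apply (h.mul_left (Real.exp (-c))).congr_fun
    intro k
    rw [mul_pow]
    ring
  calc egf (stablePMF c α hα0 hα1) (ENNReal.ofReal s)
      = ∑' k : ℕ, (poissonPMF c.toNNReal) k * (egf (sibPMF α hα0 hα1) (ENNReal.ofReal s)) ^ k := by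
        rw [stablePMF, egf_bind]
        exact tsum_congr fun k => by rw [egf_sibPow]
    _ = ∑' k : ℕ, ENNReal.ofReal (Real.exp (-c) * c ^ k / (Nat.factorial k) * y ^ k) := by
        apply tsum_congr
        intro k
        rw [egf_sibPMF α hα0 hα1 hs0 hs1]
        have hpois : (poissonPMF c.toNNReal) k
            = ENNReal.ofReal (Real.exp (-c) * c ^ k / (Nat.factorial k)) := by
          show ENNReal.ofReal (poissonPMFReal c.toNNReal k) = _
          rw [poissonPMFReal, hcast]
        rw [hpois, ← ENNReal.ofReal_pow hy0, ← ENNReal.ofReal_mul (by positivity)]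
    _ = ENNReal.ofReal (∑' k : ℕ, Real.exp (-c) * c ^ k / (Nat.factorial k) * y ^ k) :=
        (ENNReal.ofReal_tsum_of_nonneg hterm hexp.summable).symm
    _ = ENNReal.ofReal (Real.exp (-c * (1 - s) ^ α)) := by
        rw [hexp.tsum_eq, ← Real.exp_add]
        congr 1
        rw [hy]
        ring

end Aux

/-- For any `c > 0` and `α ∈ (0,1]`, `s ↦ exp (-c (1-s)^α)` is the pgf of a `ℕ`-valued
random variable, and this random variable is discrete `α`-stable:
`t^{1/α} ∘ ξ' + (1-t)^{1/α} ∘ ξ'' =_d ξ` for all `t ∈ [0,1]`. -/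
theorem exists_discrete_stable (c α : ℝ) (hc : 0 < c) (hα0 : 0 < α) (hα1 : α ≤ 1) :
    ∃ p : PMF ℕ,
      (∀ s : ℝ, 0 ≤ s → s ≤ 1 → pgf p s = Real.exp (-c * (1 - s) ^ α)) ∧
      (∀ t : ℝ, 0 ≤ t → t ≤ 1 →
        pmfConv (pmfThin (t ^ (1/α)) p) (pmfThin ((1 - t) ^ (1/α)) p) = p) := by
  refine ⟨stablePMF c α hα0 hα1, ?_, ?_⟩
  · intro s hs0 hs1
    rw [pgf_eq_egf _ hs0, egf_stablePMF c α hc hα0 hα1 hs0 hs1,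
      ENNReal.toReal_ofReal (Real.exp_nonneg _)]
  · intro t ht0 ht1
    have hαinv : (0:ℝ) ≤ 1/α := by positivity
    have ht0' : (0:ℝ) ≤ 1 - t := by linarith
    have hu0 : 0 ≤ t ^ (1/α) := Real.rpow_nonneg ht0 _
    have hu1 : t ^ (1/α) ≤ 1 := Real.rpow_le_one ht0 ht1 hαinv
    have hv0 : 0 ≤ (1 - t) ^ (1/α) := Real.rpow_nonneg ht0' _
    have hv1 : (1 - t) ^ (1/α) ≤ 1 := Real.rpow_le_one ht0' (by linarith) hαinv
    have huα : (t ^ (1/α)) ^ α = t := by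
      rw [← Real.rpow_mul ht0, one_div, inv_mul_cancel₀ (ne_of_gt hα0), Real.rpow_one]
    have hvα : ((1 - t) ^ (1/α)) ^ α = 1 - t := by
      rw [← Real.rpow_mul ht0', one_div, inv_mul_cancel₀ (ne_of_gt hα0), Real.rpow_one]
    apply pgf_inj
    intro s hs0 hs1
    have harg : ∀ w : ℝ, 0 ≤ w → w ≤ 1 →
        (1 - ENNReal.ofReal w) + ENNReal.ofReal w * ENNReal.ofReal s
          = ENNReal.ofReal (1 - w + w * s) := by
      intro w hw0 hw1
      rw [← ENNReal.ofReal_one, ← ENNReal.ofReal_sub 1 hw0,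
        ← ENNReal.ofReal_mul hw0,
        ← ENNReal.ofReal_add (by linarith) (mul_nonneg hw0 hs0.le)]
    have hs₁0 : 0 ≤ 1 - t ^ (1/α) + t ^ (1/α) * s := by nlinarith
    have hs₁1 : 1 - t ^ (1/α) + t ^ (1/α) * s ≤ 1 := by nlinarith
    have hs₂0 : 0 ≤ 1 - (1 - t) ^ (1/α) + (1 - t) ^ (1/α) * s := by nlinarith
    have hs₂1 : 1 - (1 - t) ^ (1/α) + (1 - t) ^ (1/α) * s ≤ 1 := by nlinarith
    rw [pgf_eq_egf _ hs0.le, pgf_eq_egf _ hs0.le, egf_conv, egf_thin hu1, egf_thin hv1,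
      harg _ hu0 hu1, harg _ hv0 hv1,
      egf_stablePMF c α hc hα0 hα1 hs₁0 hs₁1,
      egf_stablePMF c α hc hα0 hα1 hs₂0 hs₂1,
      egf_stablePMF c α hc hα0 hα1 hs0.le hs1.le,
      ← ENNReal.ofReal_mul (Real.exp_nonneg _),
      ENNReal.toReal_ofReal (by positivity),
      ENNReal.toReal_ofReal (Real.exp_nonneg _), ← Real.exp_add]
    congr 1
    have h1 : 1 - (1 - t ^ (1/α) + t ^ (1/α) * s) = t ^ (1/α) * (1 - s) := by ring
    have h2 : 1 - (1 - (1 - t) ^ (1/α) + (1 - t) ^ (1/α) * s) = (1 - t) ^ (1/α) * (1 - s) := by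
      ring
    rw [h1, h2, Real.mul_rpow hu0 (by linarith), Real.mul_rpow hv0 (by linarith), huα, hvα]
    ring
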